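/- There exists a > 4 and constants η ∈ (0,1), δ ∈ (0,1) such that η⁻¹·δ⁻¹·(∫ g_a^3)/(∫ g_a^2)^3 < 1, where the integrals are over (-1/2,1/2). -/

import Mathlib

open MeasureTheory

/-- The piecewise design density `g_a`: even, equal to `a/4` on `(0,1/a)`,
linear on `(1/a,2/a)`, equal to `a/(4(a-3))` on `(2/a,1/2)`, and `0` beyond `1/2`. -/
noncomputable def gdens (a x : ℝ) : ℝ :=
  if |x| < 1 / a then a / 4
  else if |x| < 2 / a then a / 4 + (|x| - 1 / a) * a * (a / (4 * (a - 3)) - a / 4)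
  else if |x| ≤ 1 / 2 then a / (4 * (a - 3))
  else 0


lemma gdens_meas (a : ℝ) : Measurable (gdens a) := by
  unfold gdens
  refine Measurable.ite ?_ measurable_const (Measurable.ite ?_ ?_ (Measurable.ite ?_ measurable_const measurable_const))
  · exact measurableSet_lt measurable_abs measurable_const
  · exact measurableSet_lt measurable_abs measurable_const
  · fun_prop
  · exact measurableSet_le measurable_abs measurable_const

lemma gdens8_bound (x : ℝ) : |gdens 8 x| ≤ 2 := by
  unfold gdens
  split_ifs with h1 h2 h3 <;> rw [abs_le] <;> constructor <;> nlinarith [abs_nonneg x]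

lemma gdens8_intble (k : ℕ) (l r : ℝ) :
    IntervalIntegrable (fun x => gdens 8 x ^ k) volume l r := by
  rw [intervalIntegrable_iff]
  refine Measure.integrableOn_of_bounded (M := 2^k) measure_Ioc_lt_top.ne
    (((gdens_meas 8).pow_const k).aestronglyMeasurable) ?_
  filter_upwards with x
  have h1 : ‖gdens 8 x ^ k‖ = |gdens 8 x| ^ k := by rw [Real.norm_eq_abs, abs_pow]
  rw [h1]
  exact pow_le_pow_left₀ (abs_nonneg _) (gdens8_bound x) k

lemma lin_int (c d l r : ℝ) (hd : d ≠ 0) (k : ℕ) :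
    ∫ x in l..r, (c + d*x)^k = ((c+d*r)^(k+1) - (c+d*l)^(k+1))/(d*(k+1)) := by
  have key : ∀ x ∈ Set.uIcc l r, HasDerivAt (fun y => (c+d*y)^(k+1)/(d*(k+1))) ((c+d*x)^k) x := by
    intro x _
    have h1 : HasDerivAt (fun y => c + d*y) d x := by
      simpa using ((hasDerivAt_id x).const_mul d).const_add c
    have h2 := (h1.fun_pow (k+1)).div_const (d*(k+1))
    refine h2.congr_deriv ?_
    have hk : ((k:ℝ)+1) ≠ 0 := by positivity
    simp only [Nat.add_sub_cancel, Nat.cast_add, Nat.cast_one]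
    field_simp
  rw [intervalIntegral.integral_eq_sub_of_hasDerivAt key
    ((by fun_prop : Continuous fun x => (c+d*x)^k).intervalIntegrable l r)]
  ring

lemma piece_congr (l r : ℝ) (hlr : l ≤ r) (f g : ℝ → ℝ)
    (h : ∀ x ∈ Set.Ioo l r, f x = g x) :
    ∫ x in l..r, f x = ∫ x in l..r, g x := by
  rw [intervalIntegral.integral_of_le hlr, intervalIntegral.integral_of_le hlr,
    integral_Ioc_eq_integral_Ioo, integral_Ioc_eq_integral_Ioo]
  exact setIntegral_congr_fun measurableSet_Ioo h

-- piecewise values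
lemma gdens8_left_const {x : ℝ} (hx : x ∈ Set.Ioo (-(1/2):ℝ) (-(1/4))) :
    gdens 8 x = 2/5 := by
  obtain ⟨h1, h2⟩ := hx
  have ha : |x| = -x := abs_of_neg (by linarith)
  unfold gdens
  rw [if_neg (by rw [ha]; norm_num; linarith), if_neg (by rw [ha]; norm_num; linarith),
    if_pos (by rw [ha]; linarith)]
  norm_num

lemma gdens8_left_lin {x : ℝ} (hx : x ∈ Set.Ioo (-(1/4):ℝ) (-(1/8))) :
    gdens 8 x = 18/5 + (64/5) * x := by
  obtain ⟨h1, h2⟩ := hx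
  have ha : |x| = -x := abs_of_neg (by linarith)
  unfold gdens
  rw [if_neg (by rw [ha]; norm_num; linarith), if_pos (by rw [ha]; norm_num; linarith), ha]
  norm_num
  ring

lemma gdens8_mid {x : ℝ} (hx : x ∈ Set.Ioo (-(1/8):ℝ) (1/8)) :
    gdens 8 x = 2 := by
  obtain ⟨h1, h2⟩ := hx
  unfold gdens
  rw [if_pos (by rw [abs_lt]; norm_num; constructor <;> linarith)]
  norm_num

lemma gdens8_right_lin {x : ℝ} (hx : x ∈ Set.Ioo ((1/8):ℝ) (1/4)) :
    gdens 8 x = 18/5 + (-64/5) * x := by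
  obtain ⟨h1, h2⟩ := hx
  have ha : |x| = x := abs_of_pos (by linarith)
  unfold gdens
  rw [if_neg (by rw [ha]; norm_num; linarith), if_pos (by rw [ha]; norm_num; linarith), ha]
  norm_num
  ring

lemma gdens8_right_const {x : ℝ} (hx : x ∈ Set.Ioo ((1/4):ℝ) (1/2)) :
    gdens 8 x = 2/5 := by
  obtain ⟨h1, h2⟩ := hx
  have ha : |x| = x := abs_of_pos (by linarith)
  unfold gdens
  rw [if_neg (by rw [ha]; norm_num; linarith), if_neg (by rw [ha]; norm_num; linarith),
    if_pos (by rw [ha]; linarith)]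
  norm_num

lemma gdens8_total (k : ℕ) :
    ∫ x in Set.Ioo (-(1/2):ℝ) (1/2), gdens 8 x ^ k =
      (∫ x in (-(1/2):ℝ)..(-(1/4)), (2/5:ℝ)^k) +
      (∫ x in (-(1/4):ℝ)..(-(1/8)), (18/5 + (64/5)*x)^k) +
      (∫ x in (-(1/8):ℝ)..(1/8), (2:ℝ)^k) +
      (∫ x in ((1/8):ℝ)..(1/4), (18/5 + (-64/5)*x)^k) +
      (∫ x in ((1/4):ℝ)..(1/2), (2/5:ℝ)^k) := by
  rw [← integral_Ioc_eq_integral_Ioo, ← intervalIntegral.integral_of_le (by norm_num)]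
  rw [← intervalIntegral.integral_add_adjacent_intervals (gdens8_intble k (-(1/2)) (-(1/4)))
        (gdens8_intble k (-(1/4)) (1/2)),
      ← intervalIntegral.integral_add_adjacent_intervals (gdens8_intble k (-(1/4)) (-(1/8)))
        (gdens8_intble k (-(1/8)) (1/2)),
      ← intervalIntegral.integral_add_adjacent_intervals (gdens8_intble k (-(1/8)) (1/8))
        (gdens8_intble k (1/8) (1/2)),
      ← intervalIntegral.integral_add_adjacent_intervals (gdens8_intble k (1/8) (1/4))
        (gdens8_intble k (1/4) (1/2))]
  have e1 : (∫ x in (-(1/2):ℝ)..(-(1/4)), gdens 8 x ^ k) = ∫ x in (-(1/2):ℝ)..(-(1/4)), (2/5:ℝ)^k :=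
    piece_congr _ _ (by norm_num) _ _ (fun x hx => by rw [gdens8_left_const hx])
  have e2 : (∫ x in (-(1/4):ℝ)..(-(1/8)), gdens 8 x ^ k) = ∫ x in (-(1/4):ℝ)..(-(1/8)), (18/5 + (64/5)*x)^k :=
    piece_congr _ _ (by norm_num) _ _ (fun x hx => by rw [gdens8_left_lin hx])
  have e3 : (∫ x in (-(1/8):ℝ)..(1/8), gdens 8 x ^ k) = ∫ x in (-(1/8):ℝ)..(1/8), (2:ℝ)^k :=
    piece_congr _ _ (by norm_num) _ _ (fun x hx => by rw [gdens8_mid hx])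
  have e4 : (∫ x in ((1/8):ℝ)..(1/4), gdens 8 x ^ k) = ∫ x in ((1/8):ℝ)..(1/4), (18/5 + (-64/5)*x)^k :=
    piece_congr _ _ (by norm_num) _ _ (fun x hx => by rw [gdens8_right_lin hx])
  have e5 : (∫ x in ((1/4):ℝ)..(1/2), gdens 8 x ^ k) = ∫ x in ((1/4):ℝ)..(1/2), (2/5:ℝ)^k :=
    piece_congr _ _ (by norm_num) _ _ (fun x hx => by rw [gdens8_right_const hx])
  rw [e1, e2, e3, e4, e5]
  ring

lemma gdens8_sq : ∫ x in Set.Ioo (-(1/2):ℝ) (1/2), gdens 8 x ^ 2 = 112/75 := by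
  rw [gdens8_total 2, lin_int (18/5) (64/5) _ _ (by norm_num) 2,
    lin_int (18/5) (-64/5) _ _ (by norm_num) 2]
  simp only [intervalIntegral.integral_const, smul_eq_mul]
  norm_num

lemma gdens8_cube : ∫ x in Set.Ioo (-(1/2):ℝ) (1/2), gdens 8 x ^ 3 = 332/125 := by
  rw [gdens8_total 3, lin_int (18/5) (64/5) _ _ (by norm_num) 3,
    lin_int (18/5) (-64/5) _ _ (by norm_num) 3]
  simp only [intervalIntegral.integral_const, smul_eq_mul]
  norm_num

theorem exists_eta_delta_ratio_lt_one :
    ∃ a : ℝ, 4 < a ∧ ∃ η ∈ Set.Ioo (0:ℝ) 1, ∃ δ ∈ Set.Ioo (0:ℝ) 1,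
      η⁻¹ * δ⁻¹ *
        ((∫ x in Set.Ioo (-(1/2) : ℝ) (1/2), (gdens a x) ^ 3) /
          (∫ x in Set.Ioo (-(1/2) : ℝ) (1/2), (gdens a x) ^ 2) ^ 3) < 1 := by
  refine ⟨8, by norm_num, 19/20, by norm_num, 19/20, by norm_num, ?_⟩
  rw [gdens8_sq, gdens8_cube]
  norm_num
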